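/- Let (K, σ) be a σ-field with σ an automorphism and let a_1, …, a_n be nonzero elements of K. Then the right rank of the set {a_1, …, a_n} is less than n if and only if the left rank of the set {σ^{−1}(a_1^{−1}), …, σ^{−1}(a_n^{−1})} is less than n. More generally, for an arbitrary subset S of K∖{0}, the right rank of S equals the left rank of Ŝ = {σ^{−1}(a^{−1}) : a ∈ S}. -/

import Mathlib

open Polynomial

variable {K : Type*} [Field K]

/-- `skewN σ i a = σ^{i-1}(a)⋯σ(a)·a`, with `skewN σ 0 a = 1`. -/
def skewN (σ : K →+* K) : ℕ → K → K
  | 0, _ => 1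
  | i + 1, a => σ (skewN σ i a) * a

/-- Right evaluation of a skew polynomial `P = Σ aᵢ Tⁱ` at `a`: `P(a) = Σ aᵢ Nᵢ(a)`. -/
noncomputable def skewEval (σ : K →+* K) (P : Polynomial K) (a : K) : K :=
  ∑ i ∈ P.support, P.coeff i * skewN σ i a

/-- Multiplication in the skew polynomial ring `K[T;σ]` (with `T·a = σ(a)·T`),
using `Polynomial K` as the carrier of coefficient sequences. -/
noncomputable def skewMul (σ : K →+* K) (P Q : Polynomial K) : Polynomial K :=
  ∑ i ∈ P.support, ∑ j ∈ Q.support,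
    Polynomial.C (P.coeff i * (⇑σ)^[i] (Q.coeff j)) * Polynomial.X ^ (i + j)

/-- The right rank of `S ⊆ K`: the least degree of a nonzero skew polynomial having every
element of `S` as a right root (`⊤` if none exists). -/
noncomputable def rightRank (σ : K →+* K) (S : Set K) : ℕ∞ :=
  sInf {d : ℕ∞ | ∃ P : Polynomial K, P ≠ 0 ∧ (∀ a ∈ S, skewEval σ P a = 0) ∧
    (P.natDegree : ℕ∞) = d}

/-- The left rank of `S ⊆ K`: the least degree of a nonzero skew polynomial having every
element of `S` as a left root, i.e. lying in `(T−a)·K[T;σ]` (`⊤` if none exists). -/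
noncomputable def leftRank (σ : K →+* K) (S : Set K) : ℕ∞ :=
  sInf {d : ℕ∞ | ∃ P : Polynomial K, P ≠ 0 ∧
    (∀ a ∈ S, ∃ R : Polynomial K, P = skewMul σ (Polynomial.X - Polynomial.C a) R) ∧
    (P.natDegree : ℕ∞) = d}

namespace SkewAux

variable (σ : K ≃+* K)

lemma it_symm_apply (k : ℕ) (x : K) : (⇑σ.symm)^[k] ((⇑σ)^[k] x) = x := by
  induction k generalizing x with
  | zero => rfl
  | succ n ih =>
    rw [Function.iterate_succ_apply' (⇑σ), Function.iterate_succ_apply (⇑σ.symm),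
      RingEquiv.symm_apply_apply, ih]

lemma it_apply_symm (k : ℕ) (x : K) : (⇑σ)^[k] ((⇑σ.symm)^[k] x) = x := by
  induction k generalizing x with
  | zero => rfl
  | succ n ih =>
    rw [Function.iterate_succ_apply' (⇑σ.symm), Function.iterate_succ_apply (⇑σ),
      RingEquiv.apply_symm_apply, ih]

lemma it_symm_mul (k : ℕ) (x y : K) :
    (⇑σ.symm)^[k] (x * y) = (⇑σ.symm)^[k] x * (⇑σ.symm)^[k] y := by
  induction k generalizing x y with
  | zero => rfl
  | succ n ih => simp [Function.iterate_succ_apply, map_mul, ih]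

lemma it_mul (k : ℕ) (x y : K) :
    (⇑σ)^[k] (x * y) = (⇑σ)^[k] x * (⇑σ)^[k] y := by
  induction k generalizing x y with
  | zero => rfl
  | succ n ih => simp [Function.iterate_succ_apply, map_mul, ih]

lemma it_symm_add (k : ℕ) (x y : K) :
    (⇑σ.symm)^[k] (x + y) = (⇑σ.symm)^[k] x + (⇑σ.symm)^[k] y := by
  induction k generalizing x y with
  | zero => rfl
  | succ n ih => simp [Function.iterate_succ_apply, map_add, ih]

lemma it_symm_zero (k : ℕ) : (⇑σ.symm)^[k] (0 : K) = 0 :=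
  Function.iterate_fixed (map_zero _) k

lemma it_zero (k : ℕ) : (⇑σ)^[k] (0 : K) = 0 :=
  Function.iterate_fixed (map_zero _) k

lemma it_one (k : ℕ) : (⇑σ)^[k] (1 : K) = 1 :=
  Function.iterate_fixed (map_one _) k

lemma it_symm_inv (k : ℕ) (x : K) : (⇑σ.symm)^[k] x⁻¹ = ((⇑σ.symm)^[k] x)⁻¹ := by
  induction k generalizing x with
  | zero => rfl
  | succ n ih => simp [Function.iterate_succ_apply, map_inv₀, ih]

lemma it_inv (k : ℕ) (x : K) : (⇑σ)^[k] x⁻¹ = ((⇑σ)^[k] x)⁻¹ := by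
  induction k generalizing x with
  | zero => rfl
  | succ n ih => simp [Function.iterate_succ_apply, map_inv₀, ih]

lemma it_symm_ne_zero (k : ℕ) (x : K) (hx : x ≠ 0) : (⇑σ.symm)^[k] x ≠ 0 := by
  intro h
  apply hx
  have := congrArg (⇑σ)^[k] h
  rwa [it_apply_symm, it_zero] at this

/-- `σ^[m] (σ.symm^[j] x) = σ^[m-j] x` for `j ≤ m`. -/
lemma it_apply_symm_of_le {j m : ℕ} (h : j ≤ m) (x : K) :
    (⇑σ)^[m] ((⇑σ.symm)^[j] x) = (⇑σ)^[m - j] x := by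
  conv_lhs => rw [show m = (m - j) + j by omega, Function.iterate_add_apply, it_apply_symm]

lemma it_symm_apply_of_le {i m : ℕ} (h : i ≤ m) (x : K) :
    (⇑σ.symm)^[m] ((⇑σ)^[i] x) = (⇑σ.symm)^[m - i] x := by
  conv_lhs => rw [show m = (m - i) + i by omega, Function.iterate_add_apply, it_symm_apply]

end SkewAux

section N

variable (σ : K ≃+* K)

lemma skewN_ne_zero (i : ℕ) {a : K} (ha : a ≠ 0) : skewN σ.toRingHom i a ≠ 0 := by
  induction i with
  | zero => exact one_ne_zero
  | succ n ih =>
    show σ (skewN σ.toRingHom n a) * a ≠ 0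
    exact mul_ne_zero (by simpa using ih) ha

lemma skewN_succ' (i : ℕ) (a : K) :
    skewN σ.toRingHom (i + 1) a = skewN σ.toRingHom i a * (⇑σ)^[i] a := by
  induction i with
  | zero => show σ 1 * a = 1 * a; rw [map_one]
  | succ n ih =>
    show σ (skewN σ.toRingHom (n+1) a) * a = σ (skewN σ.toRingHom n a) * a * (⇑σ)^[n+1] a
    rw [ih, map_mul, Function.iterate_succ_apply']
    ring

lemma skewN_add (i j : ℕ) (a : K) :
    skewN σ.toRingHom (i + j) a
      = skewN σ.toRingHom i a * (⇑σ)^[i] (skewN σ.toRingHom j a) := by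
  induction j with
  | zero => show skewN σ.toRingHom i a = _ * (⇑σ)^[i] 1
            rw [SkewAux.it_one]; ring
  | succ n ih =>
    rw [show i + (n+1) = (i+n)+1 by ring, skewN_succ', ih, skewN_succ',
      SkewAux.it_mul, Function.iterate_add_apply]
    ring

end N

section M

variable (σ : K ≃+* K)

/-- `skewM σ j b = b·σ⁻¹(b)⋯σ^{-(j-1)}(b)`. -/
def skewM : ℕ → K → K
  | 0, _ => 1
  | j + 1, b => b * σ.symm (skewM j b)

lemma skewM_succ' (j : ℕ) (b : K) :
    skewM σ (j + 1) b = skewM σ j b * (⇑σ.symm)^[j] b := by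
  induction j with
  | zero => show b * σ.symm 1 = 1 * b; rw [map_one]; ring
  | succ n ih =>
    show b * σ.symm (skewM σ (n+1) b) = skewM σ (n+1) b * (⇑σ.symm)^[n+1] b
    conv_lhs => rw [ih]
    rw [map_mul, ← Function.iterate_succ_apply' (⇑σ.symm)]
    show b * (σ.symm (skewM σ n b) * (⇑σ.symm)^[n+1] b)
        = (b * σ.symm (skewM σ n b)) * (⇑σ.symm)^[n+1] b
    ring

/-- `M_j(σ⁻¹(a⁻¹)) = (σ^{-j}(N_j(a)))⁻¹`. -/
lemma skewM_eq_inv (j : ℕ) (a : K) :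
    skewM σ j (σ.symm a⁻¹) = ((⇑σ.symm)^[j] (skewN σ.toRingHom j a))⁻¹ := by
  induction j with
  | zero => simp [skewM, skewN]
  | succ n ih =>
    rw [skewM_succ', ih]
    show _ = ((⇑σ.symm)^[n+1] (σ.toRingHom (skewN σ.toRingHom n a) * a))⁻¹
    rw [SkewAux.it_symm_mul, mul_inv]
    congr 1
    · congr 1
      simp [Function.iterate_succ_apply]
    · rw [← Function.iterate_succ_apply (⇑σ.symm), SkewAux.it_symm_inv]

end M

section Ev

variable (σ : K ≃+* K) (f : K →+* K)

lemma skewEval_eq_range {P : Polynomial K} {n : ℕ} (h : P.natDegree ≤ n) (a : K) :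
    skewEval f P a = ∑ i ∈ Finset.range (n+1), P.coeff i * skewN f i a := by
  refine Finset.sum_subset ?_ ?_
  · exact (P.supp_subset_range_natDegree_succ).trans
      (Finset.range_subset_range.2 (by omega))
  · intro i _ hi
    rw [Polynomial.notMem_support_iff.1 hi, zero_mul]

/-- left evaluation (sum truncated at degree `n`). -/
noncomputable def leftev (Q : Polynomial K) (b : K) (n : ℕ) : K :=
  ∑ i ∈ Finset.range (n+1), skewM σ i b * (⇑σ.symm)^[i] (Q.coeff i)

lemma leftev_congr {Q : Polynomial K} {b : K} {n m : ℕ}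
    (hn : Q.natDegree ≤ n) (hm : Q.natDegree ≤ m) :
    leftev σ Q b n = leftev σ Q b m := by
  have key : ∀ k, Q.natDegree ≤ k → leftev σ Q b k = leftev σ Q b Q.natDegree := by
    intro k hk
    refine (Finset.sum_subset (Finset.range_subset_range.2 (by omega)) ?_).symm
    intro i _ hi
    have : Q.coeff i = 0 :=
      Polynomial.coeff_eq_zero_of_natDegree_lt (by simpa using hi)
    rw [this, SkewAux.it_symm_zero, mul_zero]
  rw [key n hn, key m hm]

lemma skewMul_XsubC (b : K) (R : Polynomial K) :
    skewMul f (Polynomial.X - Polynomial.C b) R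
      = Polynomial.X * R.map f - Polynomial.C b * R := by
  unfold skewMul
  have hdeg : (Polynomial.X - Polynomial.C b).natDegree = 1 := Polynomial.natDegree_X_sub_C b
  have hext : ∑ i ∈ (Polynomial.X - Polynomial.C b).support, ∑ j ∈ R.support,
        Polynomial.C ((Polynomial.X - Polynomial.C b).coeff i * (⇑f)^[i] (R.coeff j))
          * Polynomial.X ^ (i + j)
      = ∑ i ∈ Finset.range 2, ∑ j ∈ R.support,
        Polynomial.C ((Polynomial.X - Polynomial.C b).coeff i * (⇑f)^[i] (R.coeff j))
          * Polynomial.X ^ (i + j) := by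
    refine Finset.sum_subset ?_ ?_
    · exact (Polynomial.supp_subset_range_natDegree_succ).trans (by rw [hdeg])
    · intro i _ hi
      refine Finset.sum_eq_zero fun j _ => ?_
      rw [Polynomial.notMem_support_iff.1 hi, zero_mul, map_zero, zero_mul]
  rw [hext]
  rw [Finset.sum_range_succ, Finset.sum_range_succ, Finset.sum_range_zero, zero_add]
  have h0 : (Polynomial.X - Polynomial.C b).coeff 0 = -b := by simp
  have h1 : (Polynomial.X - Polynomial.C b).coeff 1 = 1 := by simp
  rw [h0, h1]
  have e1 : ∑ j ∈ R.support, Polynomial.C (-b * (⇑f)^[0] (R.coeff j)) * Polynomial.X ^ (0 + j)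
      = -(Polynomial.C b * R) := by
    conv_rhs => rw [Polynomial.as_sum_support R]
    rw [Finset.mul_sum, ← Finset.sum_neg_distrib]
    refine Finset.sum_congr rfl fun j _ => ?_
    rw [Function.iterate_zero_apply, zero_add, Polynomial.C_mul_X_pow_eq_monomial,
      Polynomial.C_mul_monomial, neg_mul, Polynomial.monomial_neg]
  have e2 : ∑ j ∈ R.support, Polynomial.C ((1:K) * (⇑f)^[1] (R.coeff j)) * Polynomial.X ^ (1 + j)
      = Polynomial.X * R.map f := by
    conv_rhs => rw [Polynomial.as_sum_support R]
    rw [Polynomial.map_sum, Finset.mul_sum]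
    refine Finset.sum_congr rfl fun j _ => ?_
    rw [Polynomial.map_monomial, Polynomial.X_mul_monomial, one_mul,
      Function.iterate_one, Polynomial.C_mul_X_pow_eq_monomial, add_comm]
  rw [e1, e2]
  ring

end Ev

section L1

variable (σ : K ≃+* K)

lemma it_symm_sub (k : ℕ) (x y : K) :
    (⇑σ.symm)^[k] (x - y) = (⇑σ.symm)^[k] x - (⇑σ.symm)^[k] y := by
  induction k generalizing x y with
  | zero => rfl
  | succ n ih => simp [Function.iterate_succ_apply, map_sub, ih]

lemma natDegree_XRC_le (b : K) (R : Polynomial K) :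
    (Polynomial.X * R.map σ.toRingHom - Polynomial.C b * R).natDegree ≤ R.natDegree + 1 := by
  have h2 : (R.map σ.toRingHom).natDegree ≤ R.natDegree := Polynomial.natDegree_map_le
  have h3 : (Polynomial.X * R.map σ.toRingHom).natDegree ≤ 1 + R.natDegree :=
    Polynomial.natDegree_mul_le.trans (by rw [Polynomial.natDegree_X]; omega)
  have h4 : (Polynomial.C b * R).natDegree ≤ 0 + R.natDegree :=
    Polynomial.natDegree_mul_le.trans (by rw [Polynomial.natDegree_C])
  refine (Polynomial.natDegree_sub_le _ _).trans (max_le (by omega) (by omega))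

lemma leftev_factor_zero (b : K) (R : Polynomial K) {n : ℕ}
    (h : (Polynomial.X * R.map σ.toRingHom - Polynomial.C b * R).natDegree ≤ n) :
    leftev σ (Polynomial.X * R.map σ.toRingHom - Polynomial.C b * R) b n = 0 := by
  set Q := Polynomial.X * R.map σ.toRingHom - Polynomial.C b * R with hQ
  set N := R.natDegree with hN
  rw [leftev_congr σ h (natDegree_XRC_le σ b R)]
  unfold leftev
  have key : ∀ k, skewM σ k b * (⇑σ.symm)^[k] (Q.coeff k)
      = skewM σ k b * (⇑σ.symm)^[k] ((Polynomial.X * R.map σ.toRingHom).coeff k)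
        - skewM σ (k+1) b * (⇑σ.symm)^[k] (R.coeff k) := by
    intro k
    rw [hQ]
    rw [Polynomial.coeff_sub, it_symm_sub, mul_sub]
    congr 1
    rw [Polynomial.coeff_C_mul, SkewAux.it_symm_mul, skewM_succ']
    ring
  rw [Finset.sum_congr rfl (fun k _ => key k), Finset.sum_sub_distrib]
  have left : ∑ k ∈ Finset.range (N + 1 + 1),
      skewM σ k b * (⇑σ.symm)^[k] ((Polynomial.X * R.map σ.toRingHom).coeff k)
      = ∑ i ∈ Finset.range (N + 1), skewM σ (i+1) b * (⇑σ.symm)^[i] (R.coeff i) := by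
    rw [Finset.sum_range_succ']
    have h0 : (Polynomial.X * R.map σ.toRingHom).coeff 0 = 0 := by
      rw [Polynomial.mul_coeff_zero, Polynomial.coeff_X_zero, zero_mul]
    rw [h0, SkewAux.it_symm_zero, mul_zero, add_zero]
    refine Finset.sum_congr rfl fun i _ => ?_
    rw [Polynomial.coeff_X_mul, Polynomial.coeff_map]
    congr 1
    rw [Function.iterate_succ_apply]
    congr 1
    simp
  have right : ∑ k ∈ Finset.range (N + 1 + 1),
      skewM σ (k+1) b * (⇑σ.symm)^[k] (R.coeff k)
      = ∑ i ∈ Finset.range (N + 1), skewM σ (i+1) b * (⇑σ.symm)^[i] (R.coeff i) := by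
    rw [Finset.sum_range_succ]
    have : R.coeff (N + 1) = 0 :=
      Polynomial.coeff_eq_zero_of_natDegree_lt (by omega)
    simp [this, SkewAux.it_symm_zero]
  rw [left, right, sub_self]

end L1

section L2

variable (σ : K ≃+* K)

def coR (b : K) (Q : Polynomial K) : ℕ → ℕ → K
  | 0, _ => 0
  | fuel+1, k => σ.symm (Q.coeff (k+1) + b * coR b Q fuel (k+1))

lemma coeff_mk (g : ℕ → K) (N k : ℕ) :
    (∑ j ∈ Finset.range N, Polynomial.monomial j (g j)).coeff k
      = if k < N then g k else 0 := by
  rw [Polynomial.finset_sum_coeff]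
  simp [Polynomial.coeff_monomial, Finset.sum_ite_eq]

lemma natDegree_mk_le (g : ℕ → K) (N : ℕ) :
    (∑ j ∈ Finset.range N, Polynomial.monomial j (g j)).natDegree ≤ N := by
  refine Polynomial.natDegree_le_iff_coeff_eq_zero.2 fun m hm => ?_
  rw [coeff_mk, if_neg (by omega)]

lemma left_root_exists {Q : Polynomial K} {b : K} {n : ℕ}
    (hdeg : Q.natDegree ≤ n) (hev : leftev σ Q b n = 0) :
    ∃ R : Polynomial K,
      Q = Polynomial.X * R.map σ.toRingHom - Polynomial.C b * R := by
  classical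
  set r : ℕ → K := fun k => coR σ b Q (n - k) k with hr
  have ha : ∀ k, n ≤ k → r k = 0 := by
    intro k hk
    have : n - k = 0 := by omega
    simp [hr, this, coR]
  have hb : ∀ k, k < n → r k = σ.symm (Q.coeff (k+1) + b * r (k+1)) := by
    intro k hk
    have h1 : n - k = (n - (k+1)) + 1 := by omega
    simp only [hr, h1, coR]
  set R : Polynomial K := ∑ j ∈ Finset.range n, Polynomial.monomial j (r j) with hR
  have hRc : ∀ k, R.coeff k = r k := by
    intro k
    rw [hR, coeff_mk]
    split
    · rfl
    · exact (ha k (by omega)).symm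
  -- telescoping claim
  have claim : ∀ d j, j + d = n →
      (∑ i ∈ Finset.range (j+1), skewM σ i b * (⇑σ.symm)^[i] (Q.coeff i))
        + skewM σ j b * (⇑σ.symm)^[j] (b * r j) = leftev σ Q b n := by
    intro d
    induction d with
    | zero =>
      intro j hj
      have hj' : j = n := by omega
      subst hj'
      rw [ha j le_rfl, mul_zero, SkewAux.it_symm_zero, mul_zero, add_zero]
      rfl
    | succ d ih =>
      intro j hj
      have hlt : j < n := by omega
      rw [hb j hlt]
      have step : skewM σ j b * (⇑σ.symm)^[j] (b * σ.symm (Q.coeff (j+1) + b * r (j+1)))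
          = skewM σ (j+1) b * (⇑σ.symm)^[j+1] (Q.coeff (j+1))
            + skewM σ (j+1) b * (⇑σ.symm)^[j+1] (b * r (j+1)) := by
        rw [SkewAux.it_symm_mul, ← Function.iterate_succ_apply (⇑σ.symm),
          SkewAux.it_symm_add, mul_add]
        rw [skewM_succ']
        ring
      rw [step, ← add_assoc, ← Finset.sum_range_succ]
      exact ih (j+1) (by omega)
  have c0 : Q.coeff 0 + b * r 0 = 0 := by
    have := claim n 0 (by omega)
    rw [hev] at this
    simpa [skewM] using this
  refine ⟨R, ?_⟩
  ext k
  rcases k with _ | k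
  · rw [Polynomial.coeff_sub, Polynomial.mul_coeff_zero, Polynomial.coeff_X_zero,
      zero_mul, Polynomial.coeff_C_mul, hRc, zero_sub]
    linear_combination c0
  · rw [Polynomial.coeff_sub, Polynomial.coeff_X_mul, Polynomial.coeff_map,
      Polynomial.coeff_C_mul, hRc, hRc]
    by_cases hk : k < n
    · rw [hb k hk]
      have he : σ.toRingHom (σ.symm (Q.coeff (k+1) + b * r (k+1)))
          = Q.coeff (k+1) + b * r (k+1) := by simp
      rw [he]
      ring
    · rw [ha k (by omega), ha (k+1) (by omega), map_zero, mul_zero, sub_zero]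
      exact Polynomial.coeff_eq_zero_of_natDegree_lt (by omega)

end L2

section Transform

variable (σ : K ≃+* K)

lemma it_symm_sum {ι : Type*} (k : ℕ) (s : Finset ι) (f : ι → K) :
    (⇑σ.symm)^[k] (∑ i ∈ s, f i) = ∑ i ∈ s, (⇑σ.symm)^[k] (f i) := by
  classical
  induction s using Finset.induction_on with
  | empty => simp [SkewAux.it_symm_zero]
  | insert _ _ h ih => rw [Finset.sum_insert h, Finset.sum_insert h, SkewAux.it_symm_add, ih]

lemma it_add (k : ℕ) (x y : K) :
    (⇑σ)^[k] (x + y) = (⇑σ)^[k] x + (⇑σ)^[k] y := by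
  induction k generalizing x y with
  | zero => rfl
  | succ n ih => simp [Function.iterate_succ_apply, map_add, ih]

lemma it_sum {ι : Type*} (k : ℕ) (s : Finset ι) (f : ι → K) :
    (⇑σ)^[k] (∑ i ∈ s, f i) = ∑ i ∈ s, (⇑σ)^[k] (f i) := by
  classical
  induction s using Finset.induction_on with
  | empty => simp [SkewAux.it_zero]
  | insert _ _ h ih => rw [Finset.sum_insert h, Finset.sum_insert h, it_add, ih]

noncomputable def revP (n : ℕ) (P : Polynomial K) : Polynomial K :=
  ∑ j ∈ Finset.range (n+1), Polynomial.monomial j ((⇑σ.symm)^[n-j] (P.coeff (n-j)))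

noncomputable def revQ (m : ℕ) (Q : Polynomial K) : Polynomial K :=
  ∑ i ∈ Finset.range (m+1), Polynomial.monomial i ((⇑σ)^[i] (Q.coeff (m-i)))

lemma natDegree_mk_le' (g : ℕ → K) (n : ℕ) :
    (∑ j ∈ Finset.range (n+1), Polynomial.monomial j (g j)).natDegree ≤ n := by
  refine Polynomial.natDegree_le_iff_coeff_eq_zero.2 fun m hm => ?_
  rw [coeff_mk, if_neg (by omega)]

lemma coeff_revP {n : ℕ} (P : Polynomial K) {j : ℕ} (hj : j ≤ n) :
    (revP σ n P).coeff j = (⇑σ.symm)^[n-j] (P.coeff (n-j)) := by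
  rw [revP, coeff_mk, if_pos (by omega)]

lemma coeff_revQ {m : ℕ} (Q : Polynomial K) {i : ℕ} (hi : i ≤ m) :
    (revQ σ m Q).coeff i = (⇑σ)^[i] (Q.coeff (m-i)) := by
  rw [revQ, coeff_mk, if_pos (by omega)]

end Transform

section Identities

variable (σ : K ≃+* K)

lemma leftev_revP {a : K} (ha : a ≠ 0) (P : Polynomial K) (n : ℕ) :
    leftev σ (revP σ n P) (σ.symm a⁻¹) n
      = (⇑σ.symm)^[n] ((∑ i ∈ Finset.range (n+1), P.coeff i * skewN σ.toRingHom i a)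
          * (skewN σ.toRingHom n a)⁻¹) := by
  have term : ∀ j, j ≤ n → skewM σ j (σ.symm a⁻¹) * (⇑σ.symm)^[j] ((revP σ n P).coeff j)
      = (⇑σ.symm)^[n] (P.coeff (n-j) * skewN σ.toRingHom (n-j) a
          * (skewN σ.toRingHom n a)⁻¹) := by
    intro j hj
    rw [coeff_revP σ P hj, ← Function.iterate_add_apply, (show j + (n-j) = n by omega),
      skewM_eq_inv, SkewAux.it_symm_mul, SkewAux.it_symm_mul, SkewAux.it_symm_inv]
    have hNn : skewN σ.toRingHom n a
        = skewN σ.toRingHom (n-j) a * (⇑σ)^[n-j] (skewN σ.toRingHom j a) := by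
      have h := skewN_add σ (n-j) j a
      rwa [show (n-j) + j = n by omega] at h
    rw [hNn, SkewAux.it_symm_mul, SkewAux.it_symm_apply_of_le σ (by omega),
      show n - (n-j) = j by omega, mul_inv]
    have h1 : (⇑σ.symm)^[n] (skewN σ.toRingHom (n-j) a) ≠ 0 :=
      SkewAux.it_symm_ne_zero σ _ _ (skewN_ne_zero σ _ ha)
    set A := (⇑σ.symm)^[n] (skewN σ.toRingHom (n-j) a) with hA
    set B := (⇑σ.symm)^[j] (skewN σ.toRingHom j a) with hB
    set X := (⇑σ.symm)^[n] (P.coeff (n-j)) with hX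
    rw [show X * A * (A⁻¹ * B⁻¹) = X * B⁻¹ * (A * A⁻¹) from by ring,
      mul_inv_cancel₀ h1, mul_one, mul_comm]
  unfold leftev
  have e1 : ∑ j ∈ Finset.range (n+1),
        skewM σ j (σ.symm a⁻¹) * (⇑σ.symm)^[j] ((revP σ n P).coeff j)
      = ∑ j ∈ Finset.range (n+1),
        (⇑σ.symm)^[n] (P.coeff (n-j) * skewN σ.toRingHom (n-j) a
          * (skewN σ.toRingHom n a)⁻¹) :=
    Finset.sum_congr rfl fun j hj => term j (Nat.lt_succ_iff.1 (Finset.mem_range.1 hj))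
  have e2 : ∑ j ∈ Finset.range (n+1),
        (⇑σ.symm)^[n] (P.coeff (n-j) * skewN σ.toRingHom (n-j) a
          * (skewN σ.toRingHom n a)⁻¹)
      = ∑ j ∈ Finset.range (n+1),
        (⇑σ.symm)^[n] (P.coeff j * skewN σ.toRingHom j a
          * (skewN σ.toRingHom n a)⁻¹) := by
    simpa using Finset.sum_range_reflect
      (fun i => (⇑σ.symm)^[n] (P.coeff i * skewN σ.toRingHom i a
        * (skewN σ.toRingHom n a)⁻¹)) (n+1)
  rw [e1, e2, Finset.sum_mul, it_symm_sum]

lemma skewEval_revQ {a : K} (ha : a ≠ 0) (Q : Polynomial K) (m : ℕ) :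
    ∑ i ∈ Finset.range (m+1), (revQ σ m Q).coeff i * skewN σ.toRingHom i a
      = (⇑σ)^[m] (leftev σ Q (σ.symm a⁻¹) m) * skewN σ.toRingHom m a := by
  unfold leftev
  rw [it_sum, Finset.sum_mul]
  have hrefl : ∑ j ∈ Finset.range (m+1),
        (⇑σ)^[m] (skewM σ j (σ.symm a⁻¹) * (⇑σ.symm)^[j] (Q.coeff j))
          * skewN σ.toRingHom m a
      = ∑ j ∈ Finset.range (m+1),
        (⇑σ)^[m] (skewM σ (m-j) (σ.symm a⁻¹) * (⇑σ.symm)^[m-j] (Q.coeff (m-j)))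
          * skewN σ.toRingHom m a := by
    have h := Finset.sum_range_reflect
      (fun j => (⇑σ)^[m] (skewM σ j (σ.symm a⁻¹) * (⇑σ.symm)^[j] (Q.coeff j))
        * skewN σ.toRingHom m a) (m+1)
    simpa using h.symm
  rw [hrefl]
  refine Finset.sum_congr rfl fun i hi => ?_
  have him : i ≤ m := Nat.lt_succ_iff.1 (Finset.mem_range.1 hi)
  rw [coeff_revQ σ Q him, SkewAux.it_mul, skewM_eq_inv, SkewAux.it_inv,
    SkewAux.it_apply_symm_of_le σ (by omega), SkewAux.it_apply_symm_of_le σ (by omega),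
    show m - (m - i) = i by omega]
  have hNm : skewN σ.toRingHom m a
      = skewN σ.toRingHom i a * (⇑σ)^[i] (skewN σ.toRingHom (m-i) a) := by
    have h := skewN_add σ i (m-i) a
    rwa [show i + (m-i) = m by omega] at h
  rw [hNm]
  have h1 : (⇑σ)^[i] (skewN σ.toRingHom (m-i) a) ≠ 0 := by
    intro h
    have h2 := congrArg (⇑σ.symm)^[i] h
    rw [SkewAux.it_symm_apply, SkewAux.it_symm_zero] at h2
    exact skewN_ne_zero σ _ ha h2
  set A := (⇑σ)^[i] (skewN σ.toRingHom (m-i) a) with hA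
  set X := (⇑σ)^[i] (Q.coeff (m-i)) with hX
  set N := skewN σ.toRingHom i a with hN
  rw [show A⁻¹ * X * (N * A) = X * N * (A * A⁻¹) from by ring,
    mul_inv_cancel₀ h1, mul_one]

end Identities

theorem rank_eq (σ : K ≃+* K) (S : Set K) (hS : (0:K) ∉ S) :
    rightRank σ.toRingHom S = leftRank σ.toRingHom ((fun x : K => σ.symm x⁻¹) '' S) := by
  apply le_antisymm
  · refine le_sInf ?_
    rintro d ⟨Q, hQ0, hroots, rfl⟩
    have hPd : (revQ σ Q.natDegree Q).natDegree ≤ Q.natDegree := by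
      rw [revQ]; exact natDegree_mk_le' _ _
    have hP0 : revQ σ Q.natDegree Q ≠ 0 := by
      intro h
      have hc := coeff_revQ σ Q (Nat.zero_le Q.natDegree)
      rw [h] at hc
      simp only [Polynomial.coeff_zero, Function.iterate_zero_apply, Nat.sub_zero] at hc
      exact hQ0 (Polynomial.leadingCoeff_eq_zero.1 hc.symm)
    have hev : ∀ a ∈ S, skewEval σ.toRingHom (revQ σ Q.natDegree Q) a = 0 := by
      intro a haS
      have ha : a ≠ 0 := fun h => hS (h ▸ haS)
      obtain ⟨R, hR⟩ := hroots (σ.symm a⁻¹) ⟨a, haS, rfl⟩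
      rw [skewMul_XsubC] at hR
      have hl : leftev σ Q (σ.symm a⁻¹) Q.natDegree = 0 := by
        rw [hR]
        exact leftev_factor_zero σ _ R (by rw [← hR])
      rw [skewEval_eq_range σ.toRingHom hPd a, skewEval_revQ σ ha Q Q.natDegree, hl,
        SkewAux.it_zero, zero_mul]
    refine le_trans (sInf_le ⟨revQ σ Q.natDegree Q, hP0, hev, rfl⟩) ?_
    exact_mod_cast hPd
  · refine le_sInf ?_
    rintro d ⟨P, hP0, hroots, rfl⟩
    have hQd : (revP σ P.natDegree P).natDegree ≤ P.natDegree := by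
      rw [revP]; exact natDegree_mk_le' _ _
    have hQ0 : revP σ P.natDegree P ≠ 0 := by
      intro h
      have hc := coeff_revP σ P (Nat.zero_le P.natDegree)
      rw [h] at hc
      simp only [Polynomial.coeff_zero, Nat.sub_zero] at hc
      refine SkewAux.it_symm_ne_zero σ P.natDegree (P.coeff P.natDegree) ?_ hc.symm
      exact fun h' => hP0 (Polynomial.leadingCoeff_eq_zero.1 h')
    have hroots' : ∀ b ∈ (fun x : K => σ.symm x⁻¹) '' S,
        ∃ R, revP σ P.natDegree P
          = skewMul σ.toRingHom (Polynomial.X - Polynomial.C b) R := by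
      rintro b ⟨a, haS, rfl⟩
      have ha : a ≠ 0 := fun h => hS (h ▸ haS)
      have hsum : ∑ i ∈ Finset.range (P.natDegree + 1),
          P.coeff i * skewN σ.toRingHom i a = 0 := by
        rw [← skewEval_eq_range σ.toRingHom le_rfl a]
        exact hroots a haS
      have hl : leftev σ (revP σ P.natDegree P) (σ.symm a⁻¹) P.natDegree = 0 := by
        rw [leftev_revP σ ha P P.natDegree, hsum, zero_mul, SkewAux.it_symm_zero]
      obtain ⟨R, hR⟩ := left_root_exists σ hQd hl
      exact ⟨R, by rw [hR, skewMul_XsubC]⟩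
    refine le_trans (sInf_le ⟨revP σ P.natDegree P, hQ0, hroots', rfl⟩) ?_
    exact_mod_cast hQd


/-- For an automorphism `σ`, the right rank of `{a₁,…,aₙ} ⊆ K∖{0}` is `< n` iff the left
rank of `{σ⁻¹(a₁⁻¹),…,σ⁻¹(aₙ⁻¹)}` is `< n`; in general the right rank of `S ⊆ K∖{0}`
equals the left rank of `Ŝ = {σ⁻¹(a⁻¹) : a ∈ S}`. -/
theorem stmt_11 {K : Type*} [Field K] (σ : K ≃+* K) :
    (∀ {n : ℕ} (a : Fin n → K), (∀ i, a i ≠ 0) →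
      (rightRank σ.toRingHom (Set.range a) < (n : ℕ∞) ↔
        leftRank σ.toRingHom ((fun x : K => σ.symm x⁻¹) '' Set.range a) < (n : ℕ∞))) ∧
    (∀ S : Set K, (0 : K) ∉ S →
      rightRank σ.toRingHom S = leftRank σ.toRingHom ((fun x : K => σ.symm x⁻¹) '' S)) := by
  constructor
  · intro n a h
    have h0 : (0 : K) ∉ Set.range a := by
      rintro ⟨i, hi⟩
      exact h i hi
    rw [rank_eq σ (Set.range a) h0]
  · exact fun S hS => rank_eq σ S hS
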